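/- In a converse setting for stability (lax monoidal F with monoidal natural transformation 0 : id ⇒ F and unit-clock compatibility, with 0₁ : 1 → F1 T-complete), the projection is a solution of the stationary system: for every object X, D(π_X) = 0_X, where π_X : T × X → X is the projection flow. -/

import Mathlib

open CategoryTheory CategoryTheory.Limits

universe v u

/-- The data of a monoidal setting for dynamic stability, without the monoid
structure on the time object: an endofunctor `F` with a laxator `ψ` (axiom D5),
stationary systems `0` (axiom D6), a time object `T` with a distinguished point
`e = 0_⊕` and a unit-clock coalgebra `1_T : T ⟶ F T`. -/
structure PreSetting (C : Type u) [Category.{v} C] [HasFiniteProducts C] where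
  /-- the endofunctor -/
  F : C ⥤ C
  /-- the laxator (axiom D5) -/
  ψ : ∀ A B : C, F.obj A ⨯ F.obj B ⟶ F.obj (A ⨯ B)
  ψ_nat : ∀ {A A' B B' : C} (u : A ⟶ A') (w : B ⟶ B'),
    prod.map (F.map u) (F.map w) ≫ ψ A' B' = ψ A B ≫ F.map (prod.map u w)
  ψ_assoc : ∀ A B D : C,
    prod.map (ψ A B) (𝟙 (F.obj D)) ≫ ψ (A ⨯ B) D ≫
        F.map (prod.associator A B D).hom =
      (prod.associator (F.obj A) (F.obj B) (F.obj D)).hom ≫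
        prod.map (𝟙 (F.obj A)) (ψ B D) ≫ ψ A (B ⨯ D)
  /-- stationary systems (axiom D6) -/
  z : ∀ A : C, A ⟶ F.obj A
  z_nat : ∀ {A B : C} (u : A ⟶ B), z A ≫ F.map u = u ≫ z B
  z_mul : ∀ A B : C, prod.map (z A) (z B) ≫ ψ A B = z (A ⨯ B)
  /-- the time object -/
  T : C
  /-- the point `0_⊕` of the time object -/
  e : ⊤_ C ⟶ T
  /-- the unit clock coalgebra -/
  oneT : T ⟶ F.obj T

namespace PreSetting

variable {C : Type u} [Category.{v} C] [HasFiniteProducts C] (S : PreSetting C)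

/-- The coalgebra `L_X := ψ_{T,X} ∘ (1_T × 0_X) : T ⨯ X ⟶ F (T ⨯ X)`. -/
noncomputable def L (X : C) : S.T ⨯ X ⟶ S.F.obj (S.T ⨯ X) :=
  prod.map S.oneT (S.z X) ≫ S.ψ S.T X

/-- The initial-condition inclusion `0_⊕ × id_X : X ⟶ T ⨯ X`. -/
noncomputable def ins (X : C) : X ⟶ S.T ⨯ X :=
  prod.lift (terminal.from X ≫ S.e) (𝟙 X)

/-- `p` is a morphism of `F`-coalgebras from `(A, f)` to `(B, g)`. -/
def IsCoalgHom {A B : C} (f : A ⟶ S.F.obj A) (g : B ⟶ S.F.obj B)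
    (p : A ⟶ B) : Prop :=
  f ≫ S.F.map p = p ≫ g

/-- The derivative of a flow `φ : T ⨯ E ⟶ E`:
`Dφ := Fφ ∘ L_E ∘ (0_⊕ × id_E)`. -/
noncomputable def deriv {E : C} (φ : S.T ⨯ E ⟶ E) : E ⟶ S.F.obj E :=
  S.ins E ≫ S.L E ≫ S.F.map φ

/-- `T`-completeness of a coalgebra `(A, f)`: every `g : B ⟶ A` extends to a
unique coalgebra morphism `γ : L_B ⟶ f` with initial condition `g`. -/
def TComplete {A : C} (f : A ⟶ S.F.obj A) : Prop :=
  ∀ {B : C} (g : B ⟶ A), ∃! γ : S.T ⨯ B ⟶ A,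
    S.IsCoalgHom (S.L B) f γ ∧ S.ins B ≫ γ = g

end PreSetting

/-- A monoidal setting for dynamic stability: a `PreSetting` together with a
monoid structure `(T, ⊕, 0_⊕)` on the time object. -/
structure DynSetting (C : Type u) [Category.{v} C] [HasFiniteProducts C]
    extends PreSetting C where
  /-- the monoid operation `⊕` on the time object -/
  mul : T ⨯ T ⟶ T
  mul_one : prod.lift (𝟙 T) (terminal.from T ≫ e) ≫ mul = 𝟙 T
  one_mul : prod.lift (terminal.from T ≫ e) (𝟙 T) ≫ mul = 𝟙 T
  mul_assoc : (prod.associator T T T).inv ≫ prod.map mul (𝟙 T) ≫ mul =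
    prod.map (𝟙 T) mul ≫ mul

namespace DynSetting

variable {C : Type u} [Category.{v} C] [HasFiniteProducts C] (S : DynSetting C)

/-- `φ : T ⨯ E ⟶ E` is a `T`-flow (monoid action). -/
def IsFlow {E : C} (φ : S.T ⨯ E ⟶ E) : Prop :=
  S.ins E ≫ φ = 𝟙 E ∧
    prod.map (𝟙 S.T) φ ≫ φ =
      (prod.associator S.T S.T E).inv ≫ prod.map S.mul (𝟙 E) ≫ φ

/-- Compatibility of the unit clock with the monoid structure:
`F(⊕) ∘ L_T = 1_T ∘ ⊕`. -/
def ClockCompat : Prop :=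
  S.L S.T ≫ S.F.map S.mul = S.mul ≫ S.oneT

end DynSetting

/-- A converse setting for stability: a monoidal setting for dynamic stability
in which the stationary system `0₁ : 1 ⟶ F 1` is neutral for the laxator
(axiom D7, making `F` lax monoidal and `0` a monoidal natural transformation)
and `0₁` is `T`-complete (axiom D8). -/
structure ConvSetting (C : Type u) [Category.{v} C] [HasFiniteProducts C]
    extends DynSetting C where
  d7_left : ∀ X : C,
    prod.map (z (⊤_ C)) (𝟙 (F.obj X)) ≫ ψ (⊤_ C) X ≫
        F.map (prod.leftUnitor X).hom = (prod.leftUnitor (F.obj X)).hom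
  d7_right : ∀ X : C,
    prod.map (𝟙 (F.obj X)) (z (⊤_ C)) ≫ ψ X (⊤_ C) ≫
        F.map (prod.rightUnitor X).hom = (prod.rightUnitor (F.obj X)).hom
  d8 : toPreSetting.TComplete (z (⊤_ C))

/-- Axiom D8 forces the terminal map `! : T ⟶ 1` to be a coalgebra morphism
from the unit clock `1_T` to the stationary system `0₁`. -/
theorem bang_coalgHom {C : Type u} [Category.{v} C]
    [HasFiniteProducts C] (S : ConvSetting C) (hcc : S.ClockCompat) :
    S.oneT ≫ S.F.map (terminal.from S.T) = terminal.from S.T ≫ S.z (⊤_ C) := by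
  obtain ⟨γ, ⟨hco, -⟩, -⟩ := S.d8 (terminal.from S.T)
  have hγ : γ = terminal.from _ := terminal.hom_ext _ _
  subst hγ
  unfold PreSetting.IsCoalgHom at hco
  have h1 : S.toPreSetting.ins S.T ≫ S.mul = 𝟙 S.T := S.one_mul
  have hF : S.F.map (S.mul ≫ terminal.from S.T) =
      S.F.map (terminal.from (S.T ⨯ S.T)) := by
    congr 1
    exact terminal.hom_ext _ _
  calc S.oneT ≫ S.F.map (terminal.from S.T)
      = S.toPreSetting.ins S.T ≫ (S.mul ≫ S.oneT) ≫ S.F.map (terminal.from S.T) := by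
        rw [← Category.assoc, ← Category.assoc, h1, Category.id_comp]
    _ = S.toPreSetting.ins S.T ≫ S.toPreSetting.L S.T ≫
          S.F.map (terminal.from (S.T ⨯ S.T)) := by
        congr 1
        rw [← hcc, Category.assoc, ← S.F.map_comp, hF]
    _ = S.toPreSetting.ins S.T ≫ terminal.from (S.T ⨯ S.T) ≫ S.z (⊤_ C) := by
        rw [hco]
    _ = terminal.from S.T ≫ S.z (⊤_ C) := by
        rw [← Category.assoc]
        congr 1
        exact terminal.hom_ext _ _

/-- **The projection flow solves the stationary system.** In a converse setting
for stability, for every object `X` the derivative of the projection flow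
`π_X : T ⨯ X ⟶ X` is the stationary system: `D(π_X) = 0_X`. -/
theorem deriv_proj_eq_stationary {C : Type u} [Category.{v} C]
    [HasFiniteProducts C] (S : ConvSetting C)
    (hclock : S.toPreSetting.TComplete S.oneT) (hcc : S.ClockCompat) (X : C) :
    S.toPreSetting.deriv (prod.snd : S.T ⨯ X ⟶ X) = S.z X := by
  have hbang := bang_coalgHom S hcc
  have hmap : prod.map S.oneT (S.z X) ≫
      prod.map (S.F.map (terminal.from S.T)) (S.F.map (𝟙 X)) =
      prod.map (terminal.from S.T) (𝟙 X) ≫ prod.map (S.z (⊤_ C)) (S.z X) := by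
    rw [prod.map_map, prod.map_map, hbang]
    simp
  have key : prod.map S.oneT (S.z X) ≫ S.ψ S.T X ≫
      S.F.map (prod.map (terminal.from S.T) (𝟙 X)) =
      prod.map (terminal.from S.T) (𝟙 X) ≫ S.z ((⊤_ C) ⨯ X) := by
    rw [← S.ψ_nat, ← Category.assoc, hmap, Category.assoc, S.z_mul]
  have hsnd : (prod.snd : S.T ⨯ X ⟶ X) =
      prod.map (terminal.from S.T) (𝟙 X) ≫ (prod.leftUnitor X).hom := by
    simp
  unfold PreSetting.deriv PreSetting.L PreSetting.ins
  rw [hsnd, S.F.map_comp]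
  simp only [Category.assoc]
  rw [reassoc_of% key, S.z_nat]
  simp
  rw [← Category.assoc, prod.lift_snd, Category.id_comp]
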